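/- Let G₁ and G₂ be simple connected graphs with n₂ = |V(G₂)| vertices in G₂ and m₁ = |E(G₁)|, m₂ = |E(G₂)| edges. Then the F-index of the edge Q-join satisfies F(G₁ ∨̱_Q G₂) = F(G₁) + F(G₂) + 3n₂²M₁(G₁) + 3m₁M₁(G₂) + M₄(G₁) + 3n₂HM(G₁) + 3ReZM(G₁) + m₁²(6m₂ + m₁n₂) + m₁n₂³. -/

import Mathlib

/-- The subdivision graph `S(G)`: a new vertex is inserted into each edge of `G`
(each edge is replaced by a path of length 2). The inserted vertices form the
right summand `↥G.edgeSet`. -/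
def Sgraph {V : Type*} (G : SimpleGraph V) : SimpleGraph (V ⊕ ↥G.edgeSet) where
  Adj x y :=
    match x, y with
    | Sum.inl v, Sum.inr e => v ∈ (e : Sym2 V)
    | Sum.inr e, Sum.inl v => v ∈ (e : Sym2 V)
    | _, _ => False
  symm := by constructor; rintro (v | e) (w | f) h <;> exact h
  loopless := by constructor; rintro (v | e) h <;> exact h

/-- The graph `R(G)`: obtained from `G` by inserting a new vertex into each edge of `G`
and joining each new vertex to the end vertices of its corresponding edge. -/
def Rgraph {V : Type*} (G : SimpleGraph V) : SimpleGraph (V ⊕ ↥G.edgeSet) where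
  Adj x y :=
    match x, y with
    | Sum.inl v, Sum.inl w => G.Adj v w
    | Sum.inl v, Sum.inr e => v ∈ (e : Sym2 V)
    | Sum.inr e, Sum.inl v => v ∈ (e : Sym2 V)
    | Sum.inr _, Sum.inr _ => False
  symm := by
    constructor
    rintro (v | e) (w | f) h
    · exact G.adj_symm h
    · exact h
    · exact h
    · exact h
  loopless := by
    constructor
    rintro (v | e) h
    · exact G.irrefl h
    · exact h

/-- The graph `Q(G)`: obtained from `G` by inserting a new vertex into each edge of `G`,
then joining by edges those pairs of new vertices lying on adjacent edges of `G`. -/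
def Qgraph {V : Type*} (G : SimpleGraph V) : SimpleGraph (V ⊕ ↥G.edgeSet) where
  Adj x y :=
    match x, y with
    | Sum.inl _, Sum.inl _ => False
    | Sum.inl v, Sum.inr e => v ∈ (e : Sym2 V)
    | Sum.inr e, Sum.inl v => v ∈ (e : Sym2 V)
    | Sum.inr e, Sum.inr f => e ≠ f ∧ ∃ v, v ∈ (e : Sym2 V) ∧ v ∈ (f : Sym2 V)
  symm := by
    constructor
    rintro (v | e) (w | f) h
    · exact h
    · exact h
    · exact h
    · exact ⟨h.1.symm, by obtain ⟨v, h1, h2⟩ := h.2; exact ⟨v, h2, h1⟩⟩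
  loopless := by
    constructor
    rintro (v | e) h
    · exact h
    · exact h.1 rfl

/-- The total graph `T(G)`: obtained from `G` by inserting a new vertex into each edge,
joining each new vertex to the end vertices of its corresponding edge, and joining by
edges those pairs of new vertices lying on adjacent edges of `G`. -/
def Tgraph {V : Type*} (G : SimpleGraph V) : SimpleGraph (V ⊕ ↥G.edgeSet) where
  Adj x y :=
    match x, y with
    | Sum.inl v, Sum.inl w => G.Adj v w
    | Sum.inl v, Sum.inr e => v ∈ (e : Sym2 V)
    | Sum.inr e, Sum.inl v => v ∈ (e : Sym2 V)
    | Sum.inr e, Sum.inr f => e ≠ f ∧ ∃ v, v ∈ (e : Sym2 V) ∧ v ∈ (f : Sym2 V)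
  symm := by
    constructor
    rintro (v | e) (w | f) h
    · exact G.adj_symm h
    · exact h
    · exact h
    · exact ⟨h.1.symm, by obtain ⟨v, h1, h2⟩ := h.2; exact ⟨v, h2, h1⟩⟩
  loopless := by
    constructor
    rintro (v | e) h
    · exact G.irrefl h
    · exact h.1 rfl

/-- The disjoint union of `H` and `K` together with all edges joining a vertex `a` of `H`
with `P a` to every vertex of `K`. -/
def joinOn {A B : Type*} (H : SimpleGraph A) (K : SimpleGraph B) (P : A → Prop) :
    SimpleGraph (A ⊕ B) where
  Adj x y :=
    match x, y with
    | Sum.inl a, Sum.inl a' => H.Adj a a'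
    | Sum.inr b, Sum.inr b' => K.Adj b b'
    | Sum.inl a, Sum.inr _ => P a
    | Sum.inr _, Sum.inl a => P a
  symm := by
    constructor
    rintro (a | b) (a' | b') h
    · exact H.adj_symm h
    · exact h
    · exact h
    · exact K.adj_symm h
  loopless := by
    constructor
    rintro (a | b) h
    · exact H.irrefl h
    · exact K.irrefl h

/-- The vertex S-join `G₁ ∨̇_S G₂`: obtained from `S(G₁)` and `G₂` by joining each vertex
of `V(G₁)` to every vertex of `G₂`. -/
def vertexSJoin {V₁ V₂ : Type*} (G₁ : SimpleGraph V₁) (G₂ : SimpleGraph V₂) :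
    SimpleGraph ((V₁ ⊕ ↥G₁.edgeSet) ⊕ V₂) :=
  joinOn (Sgraph G₁) G₂ (fun x => x.isLeft)

/-- The edge S-join `G₁ ∨̱_S G₂`: obtained from `S(G₁)` and `G₂` by joining each inserted
vertex (each vertex of `I(G₁)`) to every vertex of `G₂`. -/
def edgeSJoin {V₁ V₂ : Type*} (G₁ : SimpleGraph V₁) (G₂ : SimpleGraph V₂) :
    SimpleGraph ((V₁ ⊕ ↥G₁.edgeSet) ⊕ V₂) :=
  joinOn (Sgraph G₁) G₂ (fun x => x.isRight)

/-- The vertex R-join `G₁ ∨̇_R G₂`. -/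
def vertexRJoin {V₁ V₂ : Type*} (G₁ : SimpleGraph V₁) (G₂ : SimpleGraph V₂) :
    SimpleGraph ((V₁ ⊕ ↥G₁.edgeSet) ⊕ V₂) :=
  joinOn (Rgraph G₁) G₂ (fun x => x.isLeft)

/-- The edge R-join `G₁ ∨̱_R G₂`. -/
def edgeRJoin {V₁ V₂ : Type*} (G₁ : SimpleGraph V₁) (G₂ : SimpleGraph V₂) :
    SimpleGraph ((V₁ ⊕ ↥G₁.edgeSet) ⊕ V₂) :=
  joinOn (Rgraph G₁) G₂ (fun x => x.isRight)

/-- The vertex Q-join `G₁ ∨̇_Q G₂`. -/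
def vertexQJoin {V₁ V₂ : Type*} (G₁ : SimpleGraph V₁) (G₂ : SimpleGraph V₂) :
    SimpleGraph ((V₁ ⊕ ↥G₁.edgeSet) ⊕ V₂) :=
  joinOn (Qgraph G₁) G₂ (fun x => x.isLeft)

/-- The edge Q-join `G₁ ∨̱_Q G₂`. -/
def edgeQJoin {V₁ V₂ : Type*} (G₁ : SimpleGraph V₁) (G₂ : SimpleGraph V₂) :
    SimpleGraph ((V₁ ⊕ ↥G₁.edgeSet) ⊕ V₂) :=
  joinOn (Qgraph G₁) G₂ (fun x => x.isRight)

/-- The vertex T-join `G₁ ∨̇_T G₂`. -/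
def vertexTJoin {V₁ V₂ : Type*} (G₁ : SimpleGraph V₁) (G₂ : SimpleGraph V₂) :
    SimpleGraph ((V₁ ⊕ ↥G₁.edgeSet) ⊕ V₂) :=
  joinOn (Tgraph G₁) G₂ (fun x => x.isLeft)

/-- The edge T-join `G₁ ∨̱_T G₂`. -/
def edgeTJoin {V₁ V₂ : Type*} (G₁ : SimpleGraph V₁) (G₂ : SimpleGraph V₂) :
    SimpleGraph ((V₁ ⊕ ↥G₁.edgeSet) ⊕ V₂) :=
  joinOn (Tgraph G₁) G₂ (fun x => x.isRight)

/-- Degree of a vertex in a graph on a finite vertex type. -/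
noncomputable def gdeg {V : Type*} [Finite V] (G : SimpleGraph V) (v : V) : ℕ :=
  haveI : Fintype ↥(G.neighborSet v) := Fintype.ofFinite _
  G.degree v

/-- The forgotten topological index (F-index): `F(G) = ∑_{v ∈ V(G)} d_G(v)³`. -/
noncomputable def Findex {V : Type*} [Finite V] (G : SimpleGraph V) : ℕ :=
  haveI := Fintype.ofFinite V
  ∑ v : V, gdeg G v ^ 3

/-- The first Zagreb index: `M₁(G) = ∑_{v ∈ V(G)} d_G(v)²`. -/
noncomputable def M1 {V : Type*} [Finite V] (G : SimpleGraph V) : ℕ :=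
  haveI := Fintype.ofFinite V
  ∑ v : V, gdeg G v ^ 2

/-- `M₄(G) = ∑_{v ∈ V(G)} d_G(v)⁴`. -/
noncomputable def M4 {V : Type*} [Finite V] (G : SimpleGraph V) : ℕ :=
  haveI := Fintype.ofFinite V
  ∑ v : V, gdeg G v ^ 4

/-- The hyper Zagreb index: `HM(G) = ∑_{uv ∈ E(G)} (d_G(u) + d_G(v))²`. -/
noncomputable def HM {V : Type*} [Finite V] (G : SimpleGraph V) : ℕ :=
  haveI : Fintype ↥G.edgeSet := Fintype.ofFinite _
  ∑ e : ↥G.edgeSet,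
    Sym2.lift ⟨fun u v => (gdeg G u + gdeg G v) ^ 2,
      fun u v => by dsimp only; rw [add_comm]⟩ (e : Sym2 V)

/-- The redefined Zagreb index:
`ReZM(G) = ∑_{uv ∈ E(G)} d_G(u) d_G(v) (d_G(u) + d_G(v))`. -/
noncomputable def ReZM {V : Type*} [Finite V] (G : SimpleGraph V) : ℕ :=
  haveI : Fintype ↥G.edgeSet := Fintype.ofFinite _
  ∑ e : ↥G.edgeSet,
    Sym2.lift ⟨fun u v => gdeg G u * gdeg G v * (gdeg G u + gdeg G v),
      fun u v => by dsimp only; ring⟩ (e : Sym2 V)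

/-- The number of edges of `G`. -/
noncomputable def numEdges {V : Type*} (G : SimpleGraph V) : ℕ :=
  Nat.card ↥G.edgeSet

private lemma sum_univ_inst {α M : Type*} [AddCommMonoid M] (i₁ i₂ : Fintype α) (f : α → M) :
    @Finset.sum α M _ (@Finset.univ α i₁) f = @Finset.sum α M _ (@Finset.univ α i₂) f := by
  rw [Subsingleton.elim i₁ i₂]

private lemma natCard_sum_subtype {A B : Type*} [Finite A] [Finite B] (p : A ⊕ B → Prop) :
    Nat.card {x : A ⊕ B // p x}
      = Nat.card {a : A // p (Sum.inl a)} + Nat.card {b : B // p (Sum.inr b)} := by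
  rw [Nat.card_congr (Equiv.subtypeSum), Nat.card_sum]

private lemma degree_eq_ncard {V : Type*} (G : SimpleGraph V) (v : V)
    [Fintype (G.neighborSet v)] : G.degree v = Nat.card {w : V // G.Adj v w} := by
  rw [← SimpleGraph.card_neighborSet_eq_degree, ← Nat.card_eq_fintype_card]
  rfl

private lemma gdeg_eq_ncard {V : Type*} [Finite V] (G : SimpleGraph V) (v : V) :
    gdeg G v = Nat.card {w : V // G.Adj v w} := by
  unfold gdeg
  exact @degree_eq_ncard _ G v (Fintype.ofFinite _)

private lemma gdeg_eq_degree {V : Type*} [Finite V] (G : SimpleGraph V) (v : V)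
    [Fintype (G.neighborSet v)] : gdeg G v = G.degree v := by
  rw [gdeg_eq_ncard, degree_eq_ncard]

private lemma ncard_incidence {V : Type*} [Finite V] (G : SimpleGraph V) (v : V) :
    Nat.card {e : G.edgeSet // v ∈ (e : Sym2 V)} = gdeg G v := by
  classical
  haveI := Fintype.ofFinite V
  rw [gdeg_eq_degree, ← SimpleGraph.card_incidenceSet_eq_degree, ← Nat.card_eq_fintype_card]
  exact Nat.card_congr ((Equiv.subtypeSubtypeEquivSubtypeInter (· ∈ G.edgeSet)
    (fun e => v ∈ e)).trans (Equiv.subtypeEquivRight (fun e => Iff.rfl)))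
private lemma ncard_true {A : Type*} (p : A → Prop) (hp : ∀ a, p a) :
    Nat.card {a : A // p a} = Nat.card A :=
  Nat.card_congr (Equiv.subtypeUnivEquiv hp)

private lemma ncard_false {A : Type*} (p : A → Prop) (hp : ∀ a, ¬ p a) :
    Nat.card {a : A // p a} = 0 := by
  haveI : IsEmpty {a : A // p a} := ⟨fun x => hp x.1 x.2⟩
  simp

private lemma ncard_shared {V : Type*} [Finite V] (G : SimpleGraph V) {u v : V} (h : G.Adj u v)
    (e : G.edgeSet) (he : (e : Sym2 V) = s(u, v)) :
    Nat.card {f : G.edgeSet // e ≠ f ∧ ∃ w, w ∈ (e : Sym2 V) ∧ w ∈ (f : Sym2 V)} + 2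
      = gdeg G u + gdeg G v := by
  classical
  haveI := Fintype.ofFinite V
  haveI : Fintype ↥G.edgeSet := Fintype.ofFinite _
  set A := Finset.univ.filter (fun f : ↥G.edgeSet => u ∈ (f : Sym2 V)) with hAdef
  set B := Finset.univ.filter (fun f : ↥G.edgeSet => v ∈ (f : Sym2 V)) with hBdef
  have hA : A.card = gdeg G u := by
    rw [← ncard_incidence G u, Nat.card_eq_fintype_card, Fintype.card_subtype]
  have hB : B.card = gdeg G v := by
    rw [← ncard_incidence G v, Nat.card_eq_fintype_card, Fintype.card_subtype]
  have hmemA : e ∈ A := by simp [hAdef, he]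
  have hmemB : e ∈ B := by simp [hBdef, he]
  have hAB : A ∩ B = {e} := by
    ext f
    simp only [hAdef, hBdef, Finset.mem_inter, Finset.mem_filter, Finset.mem_univ, true_and,
      Finset.mem_singleton]
    constructor
    · rintro ⟨h1, h2⟩
      apply Subtype.ext
      rw [(Sym2.mem_and_mem_iff h.ne).mp ⟨h1, h2⟩, he]
    · rintro rfl
      refine ⟨?_, ?_⟩ <;> simp [he]
  have hT : Finset.univ.filter
      (fun f : ↥G.edgeSet => e ≠ f ∧ ∃ w, w ∈ (e : Sym2 V) ∧ w ∈ (f : Sym2 V))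
      = (A ∪ B).erase e := by
    ext f
    simp only [Finset.mem_filter, Finset.mem_univ, true_and, Finset.mem_erase, Finset.mem_union,
      hAdef, hBdef, he, Sym2.mem_iff]
    constructor
    · rintro ⟨h1, w, (rfl | rfl), h3⟩
      exacts [⟨Ne.symm h1, Or.inl h3⟩, ⟨Ne.symm h1, Or.inr h3⟩]
    · rintro ⟨h1, (h2 | h2)⟩
      exacts [⟨Ne.symm h1, u, Or.inl rfl, h2⟩, ⟨Ne.symm h1, v, Or.inr rfl, h2⟩]
  have hcard : Nat.card {f : G.edgeSet // e ≠ f ∧ ∃ w, w ∈ (e : Sym2 V) ∧ w ∈ (f : Sym2 V)}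
      = ((A ∪ B).erase e).card := by
    rw [Nat.card_eq_fintype_card, Fintype.card_subtype, hT]
  have h1 := Finset.card_union_add_card_inter A B
  have h2 := Finset.card_erase_add_one (Finset.mem_union_left B hmemA)
  rw [hcard, ← hA, ← hB, ← h1, hAB, Finset.card_singleton]
  omega
section DegJ

variable {V₁ V₂ : Type*} [Finite V₁] [Finite V₂] (G₁ : SimpleGraph V₁) (G₂ : SimpleGraph V₂)

private lemma deg_J_left (v : V₁) :
    gdeg (edgeQJoin G₁ G₂) (Sum.inl (Sum.inl v)) = gdeg G₁ v := by
  rw [gdeg_eq_ncard, natCard_sum_subtype, natCard_sum_subtype]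
  have h1 : Nat.card {w : V₁ //
      (edgeQJoin G₁ G₂).Adj (Sum.inl (Sum.inl v)) (Sum.inl (Sum.inl w))} = 0 :=
    ncard_false _ (fun a ha => ha)
  have h2 : Nat.card {e : ↥G₁.edgeSet //
      (edgeQJoin G₁ G₂).Adj (Sum.inl (Sum.inl v)) (Sum.inl (Sum.inr e))}
      = gdeg G₁ v := ncard_incidence G₁ v
  have h3 : Nat.card {b : V₂ //
      (edgeQJoin G₁ G₂).Adj (Sum.inl (Sum.inl v)) (Sum.inr b)} = 0 :=
    ncard_false _ (fun b hb => by simp [edgeQJoin, joinOn] at hb)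
  rw [h1, h2, h3]
  omega

private lemma deg_J_right (b : V₂) :
    gdeg (edgeQJoin G₁ G₂) (Sum.inr b) = gdeg G₂ b + Nat.card ↥G₁.edgeSet := by
  rw [gdeg_eq_ncard, natCard_sum_subtype, natCard_sum_subtype]
  have h1 : Nat.card {w : V₁ //
      (edgeQJoin G₁ G₂).Adj (Sum.inr b) (Sum.inl (Sum.inl w))} = 0 :=
    ncard_false _ (fun a ha => by simp [edgeQJoin, joinOn] at ha)
  have h2 : Nat.card {e : ↥G₁.edgeSet //
      (edgeQJoin G₁ G₂).Adj (Sum.inr b) (Sum.inl (Sum.inr e))} = Nat.card ↥G₁.edgeSet :=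
    ncard_true _ (fun e => rfl)
  have h3 : Nat.card {b' : V₂ //
      (edgeQJoin G₁ G₂).Adj (Sum.inr b) (Sum.inr b')} = gdeg G₂ b :=
    (gdeg_eq_ncard G₂ b).symm
  rw [h1, h2, h3]
  omega

private lemma deg_J_mid {u v : V₁} (h : G₁.Adj u v) (e : ↥G₁.edgeSet)
    (he : (e : Sym2 V₁) = s(u, v)) :
    gdeg (edgeQJoin G₁ G₂) (Sum.inl (Sum.inr e))
      = gdeg G₁ u + gdeg G₁ v + Nat.card V₂ := by
  rw [gdeg_eq_ncard, natCard_sum_subtype, natCard_sum_subtype]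
  have h1 : Nat.card {w : V₁ //
      (edgeQJoin G₁ G₂).Adj (Sum.inl (Sum.inr e)) (Sum.inl (Sum.inl w))} = 2 := by
    have : Nat.card ↥({u, v} : Set V₁) = 2 := by
      rw [Nat.card_coe_set_eq, Set.ncard_pair h.ne]
    rw [← this]
    exact Nat.card_congr (Equiv.subtypeEquivRight (fun w => by
      show w ∈ (e : Sym2 V₁) ↔ _
      simp [he, Sym2.mem_iff]))
  have h2 : Nat.card {f : ↥G₁.edgeSet //
      (edgeQJoin G₁ G₂).Adj (Sum.inl (Sum.inr e)) (Sum.inl (Sum.inr f))} + 2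
      = gdeg G₁ u + gdeg G₁ v := by
    rw [← ncard_shared G₁ h e he]
    congr 1
  have h3 : Nat.card {b : V₂ //
      (edgeQJoin G₁ G₂).Adj (Sum.inl (Sum.inr e)) (Sum.inr b)} = Nat.card V₂ :=
    ncard_true _ (fun b => rfl)
  rw [h1, h3]
  omega

end DegJ
private lemma sum_lift_add {V : Type*} [Fintype V] (G : SimpleGraph V)
    [Fintype ↥G.edgeSet] (g : V → ℕ) (f : Sym2 V → ℕ)
    (hf : ∀ a b, G.Adj a b → f s(a, b) = g a + g b) :
    ∑ e : ↥G.edgeSet, f (e : Sym2 V) = ∑ v : V, gdeg G v * g v := by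
  classical
  rw [Finset.sum_set_coe]
  have hEF : G.edgeSet.toFinset = G.edgeFinset := rfl
  rw [hEF]
  have step1 : ∀ e ∈ G.edgeFinset, f e = ∑ w ∈ Finset.univ.filter (fun w => w ∈ e), g w := by
    intro e he
    rw [SimpleGraph.mem_edgeFinset] at he
    induction e with
    | _ a b =>
      have hadj : G.Adj a b := he
      have hfil : Finset.univ.filter (fun w => w ∈ s(a, b)) = {a, b} := by
        ext w; simp [Sym2.mem_iff]
      rw [hfil, Finset.sum_pair hadj.ne, hf a b hadj]
  rw [Finset.sum_congr rfl step1]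
  simp_rw [Finset.sum_filter]
  rw [Finset.sum_comm]
  refine Finset.sum_congr rfl (fun w _ => ?_)
  rw [← Finset.sum_filter, Finset.sum_const, ← SimpleGraph.incidenceFinset_eq_filter,
    SimpleGraph.card_incidenceFinset_eq_degree, smul_eq_mul, gdeg_eq_degree]
private lemma Findex_eq {V : Type*} [Fintype V] (G : SimpleGraph V) :
    Findex G = ∑ v : V, gdeg G v ^ 3 := by
  unfold Findex; exact sum_univ_inst _ _ _

private lemma M1_eq {V : Type*} [Fintype V] (G : SimpleGraph V) :
    M1 G = ∑ v : V, gdeg G v ^ 2 := by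
  unfold M1; exact sum_univ_inst _ _ _

private lemma M4_eq {V : Type*} [Fintype V] (G : SimpleGraph V) :
    M4 G = ∑ v : V, gdeg G v ^ 4 := by
  unfold M4; exact sum_univ_inst _ _ _

private lemma HM_eq {V : Type*} [Finite V] (G : SimpleGraph V) [Fintype ↥G.edgeSet] :
    HM G = ∑ e : ↥G.edgeSet,
      Sym2.lift ⟨fun u v => (gdeg G u + gdeg G v) ^ 2,
        fun u v => by dsimp only; rw [add_comm]⟩ (e : Sym2 V) := by
  unfold HM; exact sum_univ_inst _ _ _

private lemma ReZM_eq {V : Type*} [Finite V] (G : SimpleGraph V) [Fintype ↥G.edgeSet] :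
    ReZM G = ∑ e : ↥G.edgeSet,
      Sym2.lift ⟨fun u v => gdeg G u * gdeg G v * (gdeg G u + gdeg G v),
        fun u v => by dsimp only; ring⟩ (e : Sym2 V) := by
  unfold ReZM; exact sum_univ_inst _ _ _
private lemma sum_gdeg {V : Type*} [Fintype V] [DecidableEq V] (G : SimpleGraph V)
    [DecidableRel G.Adj] : ∑ v : V, gdeg G v = 2 * Nat.card ↥G.edgeSet := by
  rw [Finset.sum_congr rfl fun v _ => gdeg_eq_degree G v,
    SimpleGraph.sum_degrees_eq_twice_card_edges, SimpleGraph.edgeFinset_card, ← Nat.card_eq_fintype_card]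
theorem Findex_edgeQJoin {V₁ V₂ : Type*} [Finite V₁] [Finite V₂]
    (G₁ : SimpleGraph V₁) (G₂ : SimpleGraph V₂)
    (hc₁ : G₁.Connected) (hc₂ : G₂.Connected)
    (n₂ m₁ m₂ : ℕ)
    (hn₂ : n₂ = Nat.card V₂)
    (hm₁ : m₁ = numEdges G₁) (hm₂ : m₂ = numEdges G₂) :
    (Findex (edgeQJoin G₁ G₂) : ℤ) =
      (Findex G₁ : ℤ) + (Findex G₂ : ℤ) + 3 * (n₂ : ℤ) ^ 2 * (M1 G₁ : ℤ) + 3 * (m₁ : ℤ) * (M1 G₂ : ℤ)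
        + (M4 G₁ : ℤ) + 3 * (n₂ : ℤ) * (HM G₁ : ℤ) + 3 * (ReZM G₁ : ℤ)
        + (m₁ : ℤ) ^ 2 * (6 * (m₂ : ℤ) + (m₁ : ℤ) * (n₂ : ℤ)) + (m₁ : ℤ) * (n₂ : ℤ) ^ 3 := by
  classical
  haveI : Fintype V₁ := Fintype.ofFinite _
  haveI : Fintype V₂ := Fintype.ofFinite _
  haveI : Fintype ↥G₁.edgeSet := Fintype.ofFinite _
  haveI : Fintype ↥G₂.edgeSet := Fintype.ofFinite _
  have hn₂' : Nat.card V₂ = n₂ := hn₂.symm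
  have hm₁' : Nat.card ↥G₁.edgeSet = m₁ := hm₁.symm
  have hm₂' : Nat.card ↥G₂.edgeSet = m₂ := hm₂.symm
  have key : Findex (edgeQJoin G₁ G₂)
      = Findex G₁ + Findex G₂ + 3 * n₂ ^ 2 * M1 G₁ + 3 * m₁ * M1 G₂
        + M4 G₁ + 3 * n₂ * HM G₁ + 3 * ReZM G₁
        + m₁ ^ 2 * (6 * m₂ + m₁ * n₂) + m₁ * n₂ ^ 3 := by
    rw [Findex_eq, Fintype.sum_sum_type, Fintype.sum_sum_type]
    have S1 : ∑ v : V₁, gdeg (edgeQJoin G₁ G₂) (Sum.inl (Sum.inl v)) ^ 3 = Findex G₁ := by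
      rw [Findex_eq]
      exact Finset.sum_congr rfl fun v _ => by rw [deg_J_left]
    have S3 : ∑ b : V₂, gdeg (edgeQJoin G₁ G₂) (Sum.inr b) ^ 3
        = Findex G₂ + 3 * m₁ * M1 G₂ + 6 * m₁ ^ 2 * m₂ + n₂ * m₁ ^ 3 := by
      have hpt : ∀ b : V₂, gdeg (edgeQJoin G₁ G₂) (Sum.inr b) ^ 3
          = gdeg G₂ b ^ 3 + 3 * m₁ * gdeg G₂ b ^ 2 + 3 * m₁ ^ 2 * gdeg G₂ b + m₁ ^ 3 := by
        intro b; rw [deg_J_right, hm₁']; ring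
      rw [Finset.sum_congr rfl fun b _ => hpt b]
      simp only [Finset.sum_add_distrib, Finset.sum_const, Finset.card_univ, smul_eq_mul]
      rw [← Finset.mul_sum, ← Finset.mul_sum]
      have hd3 : ∑ b : V₂, gdeg G₂ b ^ 3 = Findex G₂ := (Findex_eq G₂).symm
      have hd2 : ∑ b : V₂, gdeg G₂ b ^ 2 = M1 G₂ := (M1_eq G₂).symm
      have hd1 : ∑ b : V₂, gdeg G₂ b = 2 * m₂ := by
        rw [sum_gdeg, hm₂']
      rw [hd3, hd2, hd1, ← Nat.card_eq_fintype_card, hn₂']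
      ring
    have S2 : ∑ e : ↥G₁.edgeSet, gdeg (edgeQJoin G₁ G₂) (Sum.inl (Sum.inr e)) ^ 3
        = M4 G₁ + 3 * ReZM G₁ + 3 * n₂ * HM G₁ + 3 * n₂ ^ 2 * M1 G₁ + m₁ * n₂ ^ 3 := by
      have hpt : ∀ e : ↥G₁.edgeSet, gdeg (edgeQJoin G₁ G₂) (Sum.inl (Sum.inr e)) ^ 3
          = Sym2.lift ⟨fun u v => gdeg G₁ u ^ 3 + gdeg G₁ v ^ 3,
              fun u v => by dsimp only; rw [add_comm]⟩ (e : Sym2 V₁)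
            + 3 * Sym2.lift ⟨fun u v => gdeg G₁ u * gdeg G₁ v * (gdeg G₁ u + gdeg G₁ v),
              fun u v => by dsimp only; ring⟩ (e : Sym2 V₁)
            + 3 * n₂ * Sym2.lift ⟨fun u v => (gdeg G₁ u + gdeg G₁ v) ^ 2,
              fun u v => by dsimp only; rw [add_comm]⟩ (e : Sym2 V₁)
            + 3 * n₂ ^ 2 * Sym2.lift ⟨fun u v => gdeg G₁ u + gdeg G₁ v,
              fun u v => by dsimp only; rw [add_comm]⟩ (e : Sym2 V₁)
            + n₂ ^ 3 := by
        rintro ⟨z, hz⟩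
        revert hz
        induction z using Sym2.ind with
        | _ u v =>
          intro hz
          have hadj : G₁.Adj u v := hz
          rw [deg_J_mid G₁ G₂ hadj ⟨s(u, v), hz⟩ rfl, hn₂']
          simp only [Sym2.lift_mk]
          ring
      rw [Finset.sum_congr rfl fun e _ => hpt e]
      simp only [Finset.sum_add_distrib, Finset.sum_const, Finset.card_univ, smul_eq_mul]
      rw [← Finset.mul_sum, ← Finset.mul_sum, ← Finset.mul_sum]
      have t3 : ∑ e : ↥G₁.edgeSet, Sym2.lift ⟨fun u v => gdeg G₁ u ^ 3 + gdeg G₁ v ^ 3,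
          fun u v => by dsimp only; rw [add_comm]⟩ (e : Sym2 V₁) = M4 G₁ := by
        rw [sum_lift_add G₁ (fun v => gdeg G₁ v ^ 3) _ (fun a b _ => rfl), M4_eq]
        exact Finset.sum_congr rfl fun v _ => by ring
      have trez : ∑ e : ↥G₁.edgeSet,
          Sym2.lift ⟨fun u v => gdeg G₁ u * gdeg G₁ v * (gdeg G₁ u + gdeg G₁ v),
            fun u v => by dsimp only; ring⟩ (e : Sym2 V₁) = ReZM G₁ := (ReZM_eq G₁).symm
      have tsq : ∑ e : ↥G₁.edgeSet, Sym2.lift ⟨fun u v => (gdeg G₁ u + gdeg G₁ v) ^ 2,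
          fun u v => by dsimp only; rw [add_comm]⟩ (e : Sym2 V₁) = HM G₁ := (HM_eq G₁).symm
      have tsd : ∑ e : ↥G₁.edgeSet, Sym2.lift ⟨fun u v => gdeg G₁ u + gdeg G₁ v,
          fun u v => by dsimp only; rw [add_comm]⟩ (e : Sym2 V₁) = M1 G₁ := by
        rw [sum_lift_add G₁ (fun v => gdeg G₁ v) _ (fun a b _ => rfl), M1_eq]
        exact Finset.sum_congr rfl fun v _ => by ring
      rw [t3, trez, tsq, tsd, ← Nat.card_eq_fintype_card, hm₁']
    rw [S1, S2, S3]
    ring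
  rw [key]
  push_cast
  ring
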